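/- Let G = G36 = ⟨a, b, c | a⁴ = b⁴ = c² = [b,c] = 1, a⁻¹ba = b⁻¹, cac = a⁻¹⟩, H = ⟨b, c, a²⟩, and H' = ⟨b², c, a⟩. Let λ be the character of H with λ(b) = i, λ(c) = λ(a²) = 1, and λ' the character of H' with λ'(a) = λ'(c) = 1, λ'(b²) = −1. Then the induced characters Ind_H^G(λ) and Ind_{H'}^G(λ') are equal. -/

import Mathlib

set_option maxHeartbeats 2000000

def G36rels : Set (FreeGroup (Fin 3)) :=
  { (FreeGroup.of 0) ^ 4, (FreeGroup.of 1) ^ 4, (FreeGroup.of 2) ^ 2,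
    FreeGroup.of 1 * FreeGroup.of 2 * (FreeGroup.of 1)⁻¹ * (FreeGroup.of 2)⁻¹,
    (FreeGroup.of 0)⁻¹ * FreeGroup.of 1 * FreeGroup.of 0 * FreeGroup.of 1,
    FreeGroup.of 2 * FreeGroup.of 0 * FreeGroup.of 2 * FreeGroup.of 0 }

def CG := Fin 32

namespace CG
instance : Fintype CG := inferInstanceAs (Fintype (Fin 32))
instance : DecidableEq CG := inferInstanceAs (DecidableEq (Fin 32))
instance (p : CG → Prop) [DecidablePred p] : Decidable (∀ u : CG, p u) :=
  @Nat.decidableForallFin 32 p ‹_›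

def cmul (u v : CG) : CG :=
  ⟨(16 * ((u.val / 16 + v.val / 16) % 2)
    + 4 * ((u.val / 4 + (v.val / 4 % 4) * 3 ^ (u.val % 2)) % 4)
    + ((u.val % 4) * 3 ^ (v.val / 16) + v.val) % 4) % 32, by omega⟩

def cinv (u : CG) : CG :=
  ⟨(16 * (u.val / 16)
    + 4 * ((u.val / 4 % 4) * 3 ^ (u.val % 2 + 1) % 4)
    + (u.val % 4) * 3 ^ (u.val / 16 + 1) % 4) % 32, by omega⟩

def cone : CG := ⟨0, by omega⟩

theorem cmul_assoc : ∀ u v w : CG, cmul (cmul u v) w = cmul u (cmul v w) := by decide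
theorem cone_mul : ∀ u : CG, cmul cone u = u := by decide
theorem cmul_one : ∀ u : CG, cmul u cone = u := by decide
theorem cinv_mul : ∀ u : CG, cmul (cinv u) u = cone := by decide

instance : Group CG where
  mul := cmul
  one := cone
  inv := cinv
  mul_assoc := cmul_assoc
  one_mul := cone_mul
  mul_one := cmul_one
  inv_mul_cancel := cinv_mul

def aC : CG := ⟨1, by omega⟩
def bC : CG := ⟨4, by omega⟩
def cC : CG := ⟨16, by omega⟩

end CG

open CG in
def φfun : Fin 3 → CG := ![aC, bC, cC]

theorem φrels : ∀ r ∈ G36rels, FreeGroup.lift φfun r = 1 := by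
  intro r hr
  simp only [G36rels, Set.mem_insert_iff, Set.mem_singleton_iff] at hr
  rcases hr with rfl | rfl | rfl | rfl | rfl | rfl <;>
    simp only [map_pow, map_mul, map_inv, FreeGroup.lift_apply_of] <;> decide

noncomputable def φ : PresentedGroup G36rels →* CG := PresentedGroup.toGroup φrels

theorem φ_of (i : Fin 3) : φ (PresentedGroup.of i) = φfun i := PresentedGroup.toGroup.of φrels

namespace G36

abbrev A : PresentedGroup G36rels := PresentedGroup.of 0
abbrev B : PresentedGroup G36rels := PresentedGroup.of 1
abbrev Cc : PresentedGroup G36rels := PresentedGroup.of 2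

theorem hmk : ∀ r ∈ G36rels, PresentedGroup.mk G36rels r = 1 := fun r hr =>
  (QuotientGroup.eq_one_iff r).2 (Subgroup.subset_normalClosure hr)

theorem ha4 : A ^ 4 = 1 := by
  have := hmk ((FreeGroup.of 0) ^ 4) (by simp [G36rels]); rwa [map_pow] at this

theorem hb4 : B ^ 4 = 1 := by
  have := hmk ((FreeGroup.of 1) ^ 4) (by simp [G36rels]); rwa [map_pow] at this

theorem hc2 : Cc ^ 2 = 1 := by
  have := hmk ((FreeGroup.of 2) ^ 2) (by simp [G36rels]); rwa [map_pow] at this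

theorem hCinv : Cc⁻¹ = Cc :=
  inv_eq_of_mul_eq_one_right (by rw [← pow_two]; exact hc2)

theorem hAinv : A⁻¹ = A ^ 3 :=
  inv_eq_of_mul_eq_one_right (by rw [← pow_succ']; exact ha4)

theorem hBinv : B⁻¹ = B ^ 3 :=
  inv_eq_of_mul_eq_one_right (by rw [← pow_succ']; exact hb4)

theorem hBC : B * Cc = Cc * B := by
  have h := hmk (FreeGroup.of 1 * FreeGroup.of 2 * (FreeGroup.of 1)⁻¹ * (FreeGroup.of 2)⁻¹)
    (by simp [G36rels])
  simp only [map_mul, map_inv] at h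
  rw [← mul_inv_eq_one, mul_inv_rev]
  simp only [mul_assoc] at h ⊢
  exact h

theorem hAB : A * B = B ^ 3 * A := by
  have h := hmk ((FreeGroup.of 0)⁻¹ * FreeGroup.of 1 * FreeGroup.of 0 * FreeGroup.of 1)
    (by simp [G36rels])
  simp only [map_mul, map_inv] at h
  have h' : A⁻¹ * B * A * B = 1 := h
  have key : B * (A * B) = A := by
    have h2 := congrArg (A * ·) h'
    simp only [mul_one] at h2
    simpa [mul_assoc] using h2
  have h3 : A * B = B⁻¹ * A := by
    conv_rhs => rw [← key]
    group
  rw [h3, hBinv]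

theorem hAC : A * Cc = Cc * A ^ 3 := by
  have h := hmk (FreeGroup.of 2 * FreeGroup.of 0 * FreeGroup.of 2 * FreeGroup.of 0)
    (by simp [G36rels])
  simp only [map_mul] at h
  have h' : Cc * A * Cc * A = 1 := h
  have key : Cc * (A * Cc) = A⁻¹ := by
    have h2 := congrArg (· * A⁻¹) h'
    simp only [one_mul] at h2
    simpa [mul_assoc] using h2
  calc A * Cc = Cc⁻¹ * (Cc * (A * Cc)) := by group
    _ = Cc⁻¹ * A⁻¹ := by rw [key]
    _ = Cc * A ^ 3 := by rw [hCinv, hAinv]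

theorem pow_mod_eq {G : Type*} [Monoid G] (g : G) {k : ℕ} (h : g ^ k = 1) (n : ℕ) :
    g ^ n = g ^ (n % k) := by
  conv_lhs => rw [← Nat.div_add_mod n k, pow_add, pow_mul, h, one_pow, one_mul]

/-- normal form -/
def fz (z y x : ℕ) : PresentedGroup G36rels := Cc ^ z * B ^ y * A ^ x

theorem hABk : ∀ k : ℕ, A * B ^ k = B ^ (3 * k) * A := by
  intro k; induction k with
  | zero => simp
  | succ k ih =>
    rw [Nat.mul_succ, pow_succ, ← mul_assoc, ih, mul_assoc, hAB, ← mul_assoc, ← pow_add]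

theorem hApBk : ∀ n k : ℕ, A ^ n * B ^ k = B ^ (3 ^ n * k) * A ^ n := by
  intro n; induction n with
  | zero => simp
  | succ n ih =>
    intro k
    have e : 3 ^ n * (3 * k) = 3 ^ (n + 1) * k := by ring
    rw [pow_succ, mul_assoc, hABk, ← mul_assoc, ih (3 * k), e, mul_assoc, ← pow_succ]

theorem hApC : ∀ n : ℕ, A ^ n * Cc = Cc * A ^ (3 * n) := by
  intro n; induction n with
  | zero => simp
  | succ n ih =>
    rw [Nat.mul_succ, pow_succ, mul_assoc, hAC, ← mul_assoc, ih, mul_assoc, ← pow_add]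

theorem hBpC (n : ℕ) : B ^ n * Cc = Cc * B ^ n := (Commute.pow_left (show Commute B Cc from hBC) n).eq

theorem fz_mod (z y x : ℕ) : fz z y x = fz (z % 2) (y % 4) (x % 4) := by
  rw [fz, fz, pow_mod_eq Cc hc2 z, pow_mod_eq B hb4 y, pow_mod_eq A ha4 x]

theorem fzA (z y x : ℕ) : fz z y x * A = fz z y (x + 1) := by
  rw [fz, fz, pow_succ, mul_assoc]

theorem fzB (z y x : ℕ) : fz z y x * B = fz z (y + 3 ^ x) x := by
  have h := hApBk x 1
  rw [pow_one, Nat.mul_one] at h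
  rw [fz, fz, mul_assoc, h, ← mul_assoc, mul_assoc (Cc ^ z), ← pow_add]

theorem fzC (z y x : ℕ) : fz z y x * Cc = fz (z + 1) y (3 * x) := by
  rw [fz, fz, mul_assoc, hApC x, ← mul_assoc, mul_assoc (Cc ^ z), hBpC, ← mul_assoc, ← pow_succ]

end G36

namespace G36
open CG

/-- decode -/
def f (u : CG) : PresentedGroup G36rels := fz (u.val / 16) (u.val / 4 % 4) (u.val % 4)

theorem P_all : ∀ g : PresentedGroup G36rels,
    ∀ z y x : ℕ, ∃ z' y' x' : ℕ, fz z y x * g = fz z' y' x' := by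
  have Pmul : ∀ g h : PresentedGroup G36rels,
      (∀ z y x : ℕ, ∃ z' y' x', fz z y x * g = fz z' y' x') →
      (∀ z y x : ℕ, ∃ z' y' x', fz z y x * h = fz z' y' x') →
      (∀ z y x : ℕ, ∃ z' y' x', fz z y x * (g * h) = fz z' y' x') := by
    intro g h hg hh z y x
    obtain ⟨z1, y1, x1, e1⟩ := hg z y x
    obtain ⟨z2, y2, x2, e2⟩ := hh z1 y1 x1
    exact ⟨z2, y2, x2, by rw [← mul_assoc, e1, e2]⟩
  have PA : ∀ z y x : ℕ, ∃ z' y' x', fz z y x * A = fz z' y' x' :=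
    fun z y x => ⟨z, y, x + 1, fzA z y x⟩
  have PB : ∀ z y x : ℕ, ∃ z' y' x', fz z y x * B = fz z' y' x' :=
    fun z y x => ⟨z, y + 3 ^ x, x, fzB z y x⟩
  have PC : ∀ z y x : ℕ, ∃ z' y' x', fz z y x * Cc = fz z' y' x' :=
    fun z y x => ⟨z + 1, y, 3 * x, fzC z y x⟩
  have Pgen : ∀ i : Fin 3, ∀ z y x : ℕ,
      ∃ z' y' x', fz z y x * PresentedGroup.of i = fz z' y' x' := by
    intro i
    fin_cases i
    · exact PA
    · exact PB
    · exact PC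
  have Pgeninv : ∀ i : Fin 3, ∀ z y x : ℕ,
      ∃ z' y' x', fz z y x * (PresentedGroup.of i)⁻¹ = fz z' y' x' := by
    intro i
    have cube : ∀ g : PresentedGroup G36rels,
        (∀ z y x : ℕ, ∃ z' y' x', fz z y x * g = fz z' y' x') →
        (∀ z y x : ℕ, ∃ z' y' x', fz z y x * g ^ 3 = fz z' y' x') := by
      intro g hg
      have h2 := Pmul g g hg hg
      have h3 := Pmul (g * g) g h2 hg
      intro z y x
      obtain ⟨z', y', x', e⟩ := h3 z y x
      exact ⟨z', y', x', by rw [pow_succ, pow_two, e]⟩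
    have PAinv : ∀ z y x : ℕ, ∃ z' y' x', fz z y x * A⁻¹ = fz z' y' x' := by
      rw [hAinv]; exact cube A PA
    have PBinv : ∀ z y x : ℕ, ∃ z' y' x', fz z y x * B⁻¹ = fz z' y' x' := by
      rw [hBinv]; exact cube B PB
    have PCinv : ∀ z y x : ℕ, ∃ z' y' x', fz z y x * Cc⁻¹ = fz z' y' x' := by
      rw [hCinv]; exact PC
    fin_cases i
    · exact PAinv
    · exact PBinv
    · exact PCinv
  intro g
  induction g using PresentedGroup.induction_on with
  | H w =>
    induction w using FreeGroup.induction_on with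
    | C1 =>
      rw [map_one]
      exact fun z y x => ⟨z, y, x, by rw [mul_one]⟩
    | of i => exact Pgen i
    | inv_of i _ =>
      rw [map_inv]
      exact Pgeninv i
    | mul v w hv hw =>
      rw [map_mul]
      exact Pmul _ _ hv hw

theorem f_surjective : Function.Surjective f := by
  intro g
  obtain ⟨z, y, x, e⟩ := P_all g 0 0 0
  have h1 : fz 0 0 0 = 1 := by simp [fz]
  rw [h1, one_mul] at e
  refine ⟨⟨16 * (z % 2) + 4 * (y % 4) + x % 4, by omega⟩, ?_⟩
  have e1 : (16 * (z % 2) + 4 * (y % 4) + x % 4) / 16 = z % 2 := by omega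
  have e2 : (16 * (z % 2) + 4 * (y % 4) + x % 4) / 4 % 4 = y % 4 := by omega
  have e3 : (16 * (z % 2) + 4 * (y % 4) + x % 4) % 4 = x % 4 := by omega
  show fz ((16 * (z % 2) + 4 * (y % 4) + x % 4) / 16) ((16 * (z % 2) + 4 * (y % 4) + x % 4) / 4 % 4)
      ((16 * (z % 2) + 4 * (y % 4) + x % 4) % 4) = g
  rw [e1, e2, e3, ← fz_mod, ← e]

end G36

namespace G36
open CG

theorem hφA : φ A = aC := φ_of 0
theorem hφB : φ B = bC := φ_of 1
theorem hφC : φ Cc = cC := φ_of 2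

theorem hφf : ∀ u : CG, φ (f u) = u := by
  have key : ∀ u : CG, cC ^ (u.val / 16) * bC ^ (u.val / 4 % 4) * aC ^ (u.val % 4) = u := by
    decide
  intro u
  rw [f, fz, map_mul, map_mul, map_pow, map_pow, map_pow, hφA, hφB, hφC]
  exact key u

theorem φ_bijective : Function.Bijective φ := by
  constructor
  · intro g h hgh
    obtain ⟨u, rfl⟩ := f_surjective g
    obtain ⟨v, rfl⟩ := f_surjective h
    rw [hφf, hφf] at hgh
    rw [hgh]
  · intro u
    exact ⟨f u, hφf u⟩

end G36

namespace CG

theorem mulK : ∀ u v : CG, u.val % 2 = 0 → v.val % 2 = 0 →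
    ((u * v).val % 2 = 0 ∧ (u * v).val / 4 % 4 = (u.val / 4 % 4 + v.val / 4 % 4) % 4) := by
  decide

theorem invK : ∀ u : CG, u.val % 2 = 0 →
    ((u⁻¹).val % 2 = 0 ∧ ((u⁻¹).val / 4 % 4 + u.val / 4 % 4) % 4 = 0) := by
  decide

theorem mulK' : ∀ u v : CG, u.val / 4 % 2 = 0 → v.val / 4 % 2 = 0 →
    ((u * v).val / 4 % 2 = 0 ∧ (u * v).val / 4 % 4 = (u.val / 4 % 4 + v.val / 4 % 4) % 4) := by
  decide

theorem invK' : ∀ u : CG, u.val / 4 % 2 = 0 →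
    ((u⁻¹).val / 4 % 2 = 0 ∧ ((u⁻¹).val / 4 % 4 + u.val / 4 % 4) % 4 = 0) := by
  decide

end CG

namespace G36
open CG

theorem fz_memH (z y x : ℕ) (hx : x % 2 = 0) :
    fz z y x ∈ Subgroup.closure ({B, Cc, A ^ 2} : Set (PresentedGroup G36rels)) := by
  have hA : A ^ x = (A ^ 2) ^ (x / 2) := by rw [← pow_mul]; congr 1; omega
  rw [fz, hA]
  exact mul_mem (mul_mem (Subgroup.pow_mem _ (Subgroup.subset_closure (by simp)) z)
    (Subgroup.pow_mem _ (Subgroup.subset_closure (by simp)) y))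
    (Subgroup.pow_mem _ (Subgroup.subset_closure (by simp)) _)

theorem fz_memH' (z y x : ℕ) (hy : y % 2 = 0) :
    fz z y x ∈ Subgroup.closure ({B ^ 2, Cc, A} : Set (PresentedGroup G36rels)) := by
  have hB : B ^ y = (B ^ 2) ^ (y / 2) := by rw [← pow_mul]; congr 1; omega
  rw [fz, hB]
  exact mul_mem (mul_mem (Subgroup.pow_mem _ (Subgroup.subset_closure (by simp)) z)
    (Subgroup.pow_mem _ (Subgroup.subset_closure (by simp)) _))
    (Subgroup.pow_mem _ (Subgroup.subset_closure (by simp)) x)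

theorem memH (g : PresentedGroup G36rels) :
    g ∈ Subgroup.closure ({B, Cc, A ^ 2} : Set (PresentedGroup G36rels)) ↔
      (φ g).val % 2 = 0 := by
  constructor
  · intro hg
    refine Subgroup.closure_induction (p := fun g _ => (φ g).val % 2 = 0) ?_ ?_ ?_ ?_ hg
    · intro x hx
      simp only [Set.mem_insert_iff, Set.mem_singleton_iff] at hx
      rcases hx with rfl | rfl | rfl
      · rw [hφB]; decide
      · rw [hφC]; decide
      · rw [map_pow, hφA]; decide
    · show (φ 1).val % 2 = 0
      rw [map_one]; decide
    · intro x y _ _ ihx ihy; rw [map_mul]; exact (mulK _ _ ihx ihy).1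
    · intro x _ ih; rw [map_inv]; exact (invK _ ih).1
  · intro h
    obtain ⟨u, rfl⟩ := f_surjective g
    rw [hφf] at h
    exact fz_memH _ _ _ (by omega)

theorem memH' (g : PresentedGroup G36rels) :
    g ∈ Subgroup.closure ({B ^ 2, Cc, A} : Set (PresentedGroup G36rels)) ↔
      (φ g).val / 4 % 2 = 0 := by
  constructor
  · intro hg
    refine Subgroup.closure_induction (p := fun g _ => (φ g).val / 4 % 2 = 0) ?_ ?_ ?_ ?_ hg
    · intro x hx
      simp only [Set.mem_insert_iff, Set.mem_singleton_iff] at hx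
      rcases hx with rfl | rfl | rfl
      · rw [map_pow, hφB]; decide
      · rw [hφC]; decide
      · rw [hφA]; decide
    · show (φ 1).val / 4 % 2 = 0
      rw [map_one]; decide
    · intro x y _ _ ihx ihy; rw [map_mul]; exact (mulK' _ _ ihx ihy).1
    · intro x _ ih; rw [map_inv]; exact (invK' _ ih).1
  · intro h
    obtain ⟨u, rfl⟩ := f_surjective g
    rw [hφf] at h
    exact fz_memH' _ _ _ (by omega)

noncomputable def μ (u : CG) : ℂ := Complex.I ^ (u.val / 4 % 4)

theorem I_pow_four : (Complex.I : ℂ) ^ 4 = 1 := by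
  rw [show (4 : ℕ) = 2 * 2 from rfl, pow_mul, Complex.I_sq]
  norm_num

theorem Imod (n : ℕ) : Complex.I ^ (n % 4) = Complex.I ^ n :=
  (pow_mod_eq Complex.I I_pow_four n).symm

theorem μ_mulK (u v : CG) (hu : u.val % 2 = 0) (hv : v.val % 2 = 0) :
    μ (u * v) = μ u * μ v := by
  obtain ⟨-, h⟩ := mulK u v hu hv
  rw [μ, μ, μ, h, Imod, pow_add]

theorem μ_mulK' (u v : CG) (hu : u.val / 4 % 2 = 0) (hv : v.val / 4 % 2 = 0) :
    μ (u * v) = μ u * μ v := by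
  obtain ⟨-, h⟩ := mulK' u v hu hv
  rw [μ, μ, μ, h, Imod, pow_add]

theorem μ_invK (u : CG) (hu : u.val % 2 = 0) : μ u⁻¹ * μ u = 1 := by
  obtain ⟨-, h⟩ := invK u hu
  rw [μ, μ, ← pow_add, ← Imod, h, pow_zero]

theorem μ_invK' (u : CG) (hu : u.val / 4 % 2 = 0) : μ u⁻¹ * μ u = 1 := by
  obtain ⟨-, h⟩ := invK' u hu
  rw [μ, μ, ← pow_add, ← Imod, h, pow_zero]

theorem μ_ne_zero (u : CG) : μ u ≠ 0 := pow_ne_zero _ Complex.I_ne_zero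

end G36

namespace G36
open CG

def ν (u : CG) : GaussianInt := (⟨0, 1⟩ : GaussianInt) ^ (u.val / 4 % 4)

theorem hμν (u : CG) : GaussianInt.toComplex (ν u) = μ u := by
  rw [ν, μ, map_pow]
  congr 1
  rw [GaussianInt.toComplex_def]
  simp

theorem sum_eq : ∀ w : CG,
    (∑ u : CG, if (u⁻¹ * w * u).val % 2 = 0 then ν (u⁻¹ * w * u) else 0)
    = ∑ u : CG, if (u⁻¹ * w * u).val / 4 % 2 = 0 then ν (u⁻¹ * w * u) else 0 := by
  decide

end G36

open Classical in
noncomputable def indChar {G : Type*} [Group G] [Fintype G] (H : Subgroup G)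
    (χ : H → ℂ) : G → ℂ := fun g =>
  (Nat.card H : ℂ)⁻¹ * ∑ x : G, if h : x⁻¹ * g * x ∈ H then χ ⟨x⁻¹ * g * x, h⟩ else 0

namespace G36
open CG

theorem lvalH (l : (Subgroup.closure ({B, Cc, A ^ 2} : Set (PresentedGroup G36rels))) →* ℂ)
    (h1 : l ⟨B, Subgroup.subset_closure (by simp)⟩ = Complex.I)
    (h2 : l ⟨Cc, Subgroup.subset_closure (by simp)⟩ = 1)
    (h3 : l ⟨A ^ 2, Subgroup.subset_closure (by simp)⟩ = 1) :
    ∀ g (hg : g ∈ Subgroup.closure ({B, Cc, A ^ 2} : Set (PresentedGroup G36rels))),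
      l ⟨g, hg⟩ = μ (φ g) := by
  intro g hg
  refine Subgroup.closure_induction (p := fun g hg => l ⟨g, hg⟩ = μ (φ g)) ?_ ?_ ?_ ?_ hg
  · intro x hx
    simp only [Set.mem_insert_iff, Set.mem_singleton_iff] at hx
    rcases hx with rfl | rfl | rfl
    · rw [h1, hφB, μ, show (bC.val / 4 % 4) = 1 from rfl, pow_one]
    · rw [h2, hφC, μ, show (cC.val / 4 % 4) = 0 from rfl, pow_zero]
    · rw [h3, map_pow, hφA, μ, show ((aC ^ 2 : CG).val / 4 % 4) = 0 from rfl, pow_zero]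
  · show l ⟨1, one_mem _⟩ = μ (φ 1)
    rw [show (⟨1, one_mem _⟩ : (Subgroup.closure ({B, Cc, A ^ 2} : Set (PresentedGroup G36rels)))) = 1 from rfl,
      map_one, map_one]
    rw [μ, show (((1 : CG)).val / 4 % 4) = 0 from rfl, pow_zero]
  · intro x y hx hy ihx ihy
    have : l ⟨x * y, mul_mem hx hy⟩ = l ⟨x, hx⟩ * l ⟨y, hy⟩ := map_mul l ⟨x, hx⟩ ⟨y, hy⟩
    rw [this, ihx, ihy, map_mul, μ_mulK _ _ ((memH x).mp hx) ((memH y).mp hy)]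
  · intro x hx ih
    have hmul : l ⟨x⁻¹, inv_mem hx⟩ * l ⟨x, hx⟩ = 1 := by
      rw [← map_mul, show (⟨x⁻¹, inv_mem hx⟩ * ⟨x, hx⟩ :
        (Subgroup.closure ({B, Cc, A ^ 2} : Set (PresentedGroup G36rels)))) = 1 from
        Subtype.ext (inv_mul_cancel x), map_one]
    have hμ : μ (φ x⁻¹) * μ (φ x) = 1 := by
      rw [map_inv]; exact μ_invK _ ((memH x).mp hx)
    rw [← ih] at hμ
    exact mul_right_cancel₀ (fun h0 => by rw [ih] at h0; exact μ_ne_zero _ h0)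
      (hmul.trans hμ.symm)

theorem lvalH' (l : (Subgroup.closure ({B ^ 2, Cc, A} : Set (PresentedGroup G36rels))) →* ℂ)
    (h1 : l ⟨A, Subgroup.subset_closure (by simp)⟩ = 1)
    (h2 : l ⟨Cc, Subgroup.subset_closure (by simp)⟩ = 1)
    (h3 : l ⟨B ^ 2, Subgroup.subset_closure (by simp)⟩ = -1) :
    ∀ g (hg : g ∈ Subgroup.closure ({B ^ 2, Cc, A} : Set (PresentedGroup G36rels))),
      l ⟨g, hg⟩ = μ (φ g) := by
  intro g hg
  refine Subgroup.closure_induction (p := fun g hg => l ⟨g, hg⟩ = μ (φ g)) ?_ ?_ ?_ ?_ hg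
  · intro x hx
    simp only [Set.mem_insert_iff, Set.mem_singleton_iff] at hx
    rcases hx with rfl | rfl | rfl
    · rw [h3, map_pow, hφB, μ, show ((bC ^ 2 : CG).val / 4 % 4) = 2 from rfl, pow_two,
        Complex.I_mul_I]
    · rw [h2, hφC, μ, show (cC.val / 4 % 4) = 0 from rfl, pow_zero]
    · rw [h1, hφA, μ, show (aC.val / 4 % 4) = 0 from rfl, pow_zero]
  · show l ⟨1, one_mem _⟩ = μ (φ 1)
    rw [show (⟨1, one_mem _⟩ : (Subgroup.closure ({B ^ 2, Cc, A} : Set (PresentedGroup G36rels)))) = 1 from rfl,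
      map_one, map_one]
    rw [μ, show (((1 : CG)).val / 4 % 4) = 0 from rfl, pow_zero]
  · intro x y hx hy ihx ihy
    have : l ⟨x * y, mul_mem hx hy⟩ = l ⟨x, hx⟩ * l ⟨y, hy⟩ := map_mul l ⟨x, hx⟩ ⟨y, hy⟩
    rw [this, ihx, ihy, map_mul, μ_mulK' _ _ ((memH' x).mp hx) ((memH' y).mp hy)]
  · intro x hx ih
    have hmul : l ⟨x⁻¹, inv_mem hx⟩ * l ⟨x, hx⟩ = 1 := by
      rw [← map_mul, show (⟨x⁻¹, inv_mem hx⟩ * ⟨x, hx⟩ :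
        (Subgroup.closure ({B ^ 2, Cc, A} : Set (PresentedGroup G36rels)))) = 1 from
        Subtype.ext (inv_mul_cancel x), map_one]
    have hμ : μ (φ x⁻¹) * μ (φ x) = 1 := by
      rw [map_inv]; exact μ_invK' _ ((memH' x).mp hx)
    rw [← ih] at hμ
    exact mul_right_cancel₀ (fun h0 => by rw [ih] at h0; exact μ_ne_zero _ h0)
      (hmul.trans hμ.symm)

theorem card16 : Nat.card {u : CG // u.val % 2 = 0} = 16 := by
  rw [Nat.card_eq_fintype_card]; decide

theorem card16' : Nat.card {u : CG // u.val / 4 % 2 = 0} = 16 := by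
  rw [Nat.card_eq_fintype_card]; decide

theorem cardH : Nat.card (Subgroup.closure ({B, Cc, A ^ 2} : Set (PresentedGroup G36rels)))
    = 16 := by
  classical
  have e : ↥(Subgroup.closure ({B, Cc, A ^ 2} : Set (PresentedGroup G36rels)))
      ≃ {u : CG // u.val % 2 = 0} :=
    (Equiv.ofBijective φ φ_bijective).subtypeEquiv (fun g => memH g)
  rw [Nat.card_congr e, card16]

theorem cardH' : Nat.card (Subgroup.closure ({B ^ 2, Cc, A} : Set (PresentedGroup G36rels)))
    = 16 := by
  classical
  have e : ↥(Subgroup.closure ({B ^ 2, Cc, A} : Set (PresentedGroup G36rels)))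
      ≃ {u : CG // u.val / 4 % 2 = 0} :=
    (Equiv.ofBijective φ φ_bijective).subtypeEquiv (fun g => memH' g)
  rw [Nat.card_congr e, card16']

end G36

open G36 CG in
theorem G36_induced_characters_eq
    [Fintype (PresentedGroup G36rels)] :
    ∀ (a b c : PresentedGroup G36rels),
    a = PresentedGroup.of 0 → b = PresentedGroup.of 1 → c = PresentedGroup.of 2 →
    ∀ (l : (Subgroup.closure {b, c, a ^ 2} : Subgroup (PresentedGroup G36rels)) →* ℂ)
      (l' : (Subgroup.closure {b ^ 2, c, a} : Subgroup (PresentedGroup G36rels)) →* ℂ),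
    l ⟨b, Subgroup.subset_closure (by simp)⟩ = Complex.I →
    l ⟨c, Subgroup.subset_closure (by simp)⟩ = 1 →
    l ⟨a ^ 2, Subgroup.subset_closure (by simp)⟩ = 1 →
    l' ⟨a, Subgroup.subset_closure (by simp)⟩ = 1 →
    l' ⟨c, Subgroup.subset_closure (by simp)⟩ = 1 →
    l' ⟨b ^ 2, Subgroup.subset_closure (by simp)⟩ = -1 →
    indChar (Subgroup.closure {b, c, a ^ 2}) (fun x => l x) =
      indChar (Subgroup.closure {b ^ 2, c, a}) (fun x => l' x) := by
  intro a b c ha hb hc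
  subst ha hb hc
  intro l l' h1 h2 h3 h4 h5 h6
  funext g
  classical
  simp only [indChar]
  rw [cardH, cardH']
  congr 1
  -- convert complex-valued sums to GaussianInt computations
  have t : ∀ (w : CG) (cond : CG → Prop) [DecidablePred cond],
      (∑ u : CG, if cond u then μ (u⁻¹ * w * u) else 0)
        = GaussianInt.toComplex (∑ u : CG, if cond u then ν (u⁻¹ * w * u) else 0) := by
    intro w cond _
    rw [map_sum]
    refine Finset.sum_congr rfl fun u _ => ?_
    split
    · exact (hμν _).symm
    · exact (map_zero _).symm
  have key : (∑ u : CG, if (u⁻¹ * φ g * u).val % 2 = 0 then μ (u⁻¹ * φ g * u) else 0)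
      = ∑ u : CG, if (u⁻¹ * φ g * u).val / 4 % 2 = 0 then μ (u⁻¹ * φ g * u) else 0 := by
    rw [t, t, sum_eq (φ g)]
  have stepL : ∀ x : PresentedGroup G36rels,
      (if h : x⁻¹ * g * x ∈ Subgroup.closure ({B, Cc, A ^ 2} : Set (PresentedGroup G36rels))
        then l ⟨x⁻¹ * g * x, h⟩ else 0)
      = (fun u : CG => if (u⁻¹ * φ g * u).val % 2 = 0 then μ (u⁻¹ * φ g * u) else 0) (φ x) := by
    intro x
    have e : φ (x⁻¹ * g * x) = (φ x)⁻¹ * φ g * φ x := by rw [map_mul, map_mul, map_inv]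
    by_cases h : x⁻¹ * g * x ∈ Subgroup.closure ({B, Cc, A ^ 2} : Set (PresentedGroup G36rels))
    · have hc := (memH _).mp h
      rw [e] at hc
      rw [dif_pos h, lvalH l h1 h2 h3 _ h, e]
      exact (if_pos hc).symm
    · have hc : ¬ (((φ x)⁻¹ * φ g * φ x).val % 2 = 0) := by
        intro hcc
        exact h ((memH _).mpr (by rw [e]; exact hcc))
      rw [dif_neg h]
      exact (if_neg hc).symm
  have stepR : ∀ x : PresentedGroup G36rels,
      (if h : x⁻¹ * g * x ∈ Subgroup.closure ({B ^ 2, Cc, A} : Set (PresentedGroup G36rels))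
        then l' ⟨x⁻¹ * g * x, h⟩ else 0)
      = (fun u : CG => if (u⁻¹ * φ g * u).val / 4 % 2 = 0 then μ (u⁻¹ * φ g * u) else 0)
        (φ x) := by
    intro x
    have e : φ (x⁻¹ * g * x) = (φ x)⁻¹ * φ g * φ x := by rw [map_mul, map_mul, map_inv]
    by_cases h : x⁻¹ * g * x ∈ Subgroup.closure ({B ^ 2, Cc, A} : Set (PresentedGroup G36rels))
    · have hc := (memH' _).mp h
      rw [e] at hc
      rw [dif_pos h, lvalH' l' h4 h5 h6 _ h, e]
      exact (if_pos hc).symm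
    · have hc : ¬ (((φ x)⁻¹ * φ g * φ x).val / 4 % 2 = 0) := by
        intro hcc
        exact h ((memH' _).mpr (by rw [e]; exact hcc))
      rw [dif_neg h]
      exact (if_neg hc).symm
  calc (∑ x : PresentedGroup G36rels,
        if h : x⁻¹ * g * x ∈ Subgroup.closure ({B, Cc, A ^ 2} : Set (PresentedGroup G36rels))
          then l ⟨x⁻¹ * g * x, h⟩ else 0)
      = ∑ x : PresentedGroup G36rels,
          (fun u : CG => if (u⁻¹ * φ g * u).val % 2 = 0 then μ (u⁻¹ * φ g * u) else 0) (φ x) :=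
        Finset.sum_congr rfl (fun x _ => stepL x)
    _ = ∑ u : CG, if (u⁻¹ * φ g * u).val % 2 = 0 then μ (u⁻¹ * φ g * u) else 0 :=
        Fintype.sum_bijective φ φ_bijective _ _ (fun x => rfl)
    _ = ∑ u : CG, if (u⁻¹ * φ g * u).val / 4 % 2 = 0 then μ (u⁻¹ * φ g * u) else 0 := key
    _ = ∑ x : PresentedGroup G36rels,
          (fun u : CG => if (u⁻¹ * φ g * u).val / 4 % 2 = 0 then μ (u⁻¹ * φ g * u) else 0)
            (φ x) := (Fintype.sum_bijective φ φ_bijective _ _ (fun x => rfl)).symm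
    _ = ∑ x : PresentedGroup G36rels,
        if h : x⁻¹ * g * x ∈ Subgroup.closure ({B ^ 2, Cc, A} : Set (PresentedGroup G36rels))
          then l' ⟨x⁻¹ * g * x, h⟩ else 0 :=
        (Finset.sum_congr rfl (fun x _ => stepR x)).symm
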